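/- For the ReLU activation σ(u) = max(u, 0), the r-th coefficient of its Hermite expansion with respect to the standard Gaussian measure satisfies, for every even integer r ≥ 2: μ_r(σ) = (−1)^{(r−2)/2} (r−3)!! / √(2π · r!). -/

import Mathlib

open MeasureTheory ProbabilityTheory Real Polynomial Set Filter Topology
open scoped Nat ENNReal NNReal

private lemma hasDerivAt_hermite_gauss (n : ℕ) (x : ℝ) :
    HasDerivAt (fun y : ℝ => (aeval y (hermite n) : ℝ) * Real.exp (-(y ^ 2 / 2)))
      (-((aeval x (hermite (n + 1)) : ℝ) * Real.exp (-(x ^ 2 / 2)))) x := by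
  have h1 : HasDerivAt (fun y : ℝ => (aeval y (hermite n) : ℝ))
      ((aeval x (derivative (hermite n)) : ℝ)) x := (hermite n).hasDerivAt_aeval x
  have h0 : HasDerivAt (fun y : ℝ => -(y ^ 2 / 2)) (-x) x := by
    simpa using ((hasDerivAt_pow 2 x).div_const 2).fun_neg
  have h3 := h1.mul h0.exp
  refine h3.congr_deriv ?_
  have hs : (aeval x (hermite (n + 1)) : ℝ)
      = x * aeval x (hermite n) - aeval x (derivative (hermite n)) := by
    rw [hermite_succ]; simp
  rw [hs]; ring

private lemma integrableOn_poly_gauss (p : ℝ[X]) :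
    IntegrableOn (fun x : ℝ => p.eval x * Real.exp (-(x ^ 2 / 2))) (Set.Ioi 0) := by
  induction p using Polynomial.induction_on' with
  | add p q hp hq => have h := hp.add hq; simp only [Polynomial.eval_add, add_mul]; exact h
  | monomial k c =>
    have h := (integrableOn_rpow_mul_exp_neg_mul_sq (by norm_num : (0:ℝ) < 1/2)
      (s := (k : ℝ)) (lt_of_lt_of_le neg_one_lt_zero (Nat.cast_nonneg k))).const_mul c
    refine IntegrableOn.congr_fun h (fun x _ => ?_) measurableSet_Ioi
    rw [Real.rpow_natCast, Polynomial.eval_monomial,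
      show -(1/2 : ℝ) * x ^ 2 = -(x ^ 2 / 2) by ring]
    ring

private lemma tendsto_poly_gauss (p : ℝ[X]) :
    Tendsto (fun x : ℝ => p.eval x * Real.exp (-(x ^ 2 / 2))) atTop (𝓝 0) := by
  have h1 := p.tendsto_div_exp_atTop
  have hb : Tendsto (fun x : ℝ => x - x ^ 2 / 2) atTop atBot := by
    refine tendsto_atBot_mono (fun x => (by nlinarith [sq_nonneg (x-2)] : x - x ^ 2 / 2 ≤ 2 - x)) ?_
    exact (tendsto_atBot_add_const_left atTop (2:ℝ)
      tendsto_neg_atTop_atBot).congr (fun x => (sub_eq_add_neg 2 x).symm)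
  have h2 : Tendsto (fun x : ℝ => Real.exp (x - x ^ 2 / 2)) atTop (𝓝 0) :=
    Real.tendsto_exp_atBot.comp hb
  have h3 := h1.mul h2
  rw [zero_mul] at h3
  refine h3.congr (fun x => ?_)
  rw [Real.exp_sub, Real.exp_neg]
  have := Real.exp_ne_zero x
  field_simp

private lemma aeval_eq_eval_map (p : ℤ[X]) (x : ℝ) :
    (aeval x p : ℝ) = (p.map (algebraMap ℤ ℝ)).eval x := by
  rw [aeval_def, eval₂_eq_eval_map]

private lemma key_integral (n : ℕ) :
    ∫ x in Set.Ioi (0:ℝ), x * (aeval x (hermite (2*n+2)) : ℝ) * Real.exp (-(x ^ 2 / 2))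
      = (((hermite (2*n)).coeff 0 : ℤ) : ℝ) := by
  set f : ℝ → ℝ := fun y =>
    -((aeval y (hermite (2*n)) : ℝ) * Real.exp (-(y ^ 2 / 2))
      + y * ((aeval y (hermite (2*n+1)) : ℝ) * Real.exp (-(y ^ 2 / 2)))) with hf
  have hderiv : ∀ x ∈ Set.Ici (0:ℝ), HasDerivAt f
      (x * (aeval x (hermite (2*n+2)) : ℝ) * Real.exp (-(x ^ 2 / 2))) x := by
    intro x _
    have h1 := hasDerivAt_hermite_gauss (2*n) x
    have h2 := hasDerivAt_hermite_gauss (2*n+1) x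
    have h3 := (hasDerivAt_id x).mul h2
    have h4 := (h1.add h3).neg
    have h5 : 2*n+1+1 = 2*n+2 := by ring
    rw [h5] at h4
    refine h4.congr_deriv ?_
    simp only [id_eq]
    ring
  have hint : IntegrableOn
      (fun x : ℝ => x * (aeval x (hermite (2*n+2)) : ℝ) * Real.exp (-(x ^ 2 / 2)))
      (Set.Ioi 0) := by
    have h := integrableOn_poly_gauss (X * (hermite (2*n+2)).map (algebraMap ℤ ℝ))
    refine IntegrableOn.congr_fun h (fun x _ => ?_) measurableSet_Ioi
    rw [Polynomial.eval_mul, Polynomial.eval_X, ← aeval_eq_eval_map]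
  have htend : Tendsto f atTop (𝓝 0) := by
    have h := (tendsto_poly_gauss ((hermite (2*n)).map (algebraMap ℤ ℝ)
      + X * (hermite (2*n+1)).map (algebraMap ℤ ℝ))).neg
    rw [neg_zero] at h
    refine h.congr (fun x => ?_)
    rw [hf]
    simp only [Polynomial.eval_add, Polynomial.eval_mul, Polynomial.eval_X,
      ← aeval_eq_eval_map]
    ring
  have := integral_Ioi_of_hasDerivAt_of_tendsto' hderiv hint htend
  rw [this, hf]
  simp [aeval_eq_eval_map, ← Polynomial.coeff_zero_eq_eval_zero, Polynomial.coeff_map]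

/-- For the ReLU activation `σ(u) = max(u, 0)`, the `r`-th coefficient of its
expansion in the orthonormal Hermite polynomial basis with respect to the standard Gaussian
measure, namely `μ_r(σ) = E_{g ~ N(0,1)}[σ(g) · He_r(g) / √(r!)]`, satisfies for every even
integer `r ≥ 2`:
`μ_r(σ) = (−1)^{(r−2)/2} (r−3)‼ / √(2π · r!)`. -/
theorem relu_hermite_coefficient (r : ℕ) (hr : 2 ≤ r) (hre : Even r) :
    (∫ g : ℝ, max g 0 * (Polynomial.aeval g (Polynomial.hermite r)) ∂(gaussianReal 0 1)) /
        Real.sqrt (r.factorial) =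
      (-1 : ℝ) ^ ((r - 2) / 2) * (Nat.doubleFactorial (r - 3) : ℝ) /
        Real.sqrt (2 * Real.pi * (r.factorial : ℝ)) := by
  obtain ⟨n, rfl⟩ : ∃ n, r = 2*n+2 := by
    obtain ⟨m, hm⟩ := hre; exact ⟨m - 1, by omega⟩
  have hmeas : Measurable (fun x => Real.toNNReal (gaussianPDFReal 0 1 x)) :=
    (measurable_gaussianPDFReal 0 1).real_toNNReal
  have step1 : (∫ g : ℝ, max g 0 * (aeval g (hermite (2*n+2)) : ℝ) ∂(gaussianReal 0 1))
      = ∫ x : ℝ, gaussianPDFReal 0 1 x * (max x 0 * (aeval x (hermite (2*n+2)) : ℝ)) := by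
    rw [gaussianReal_of_var_ne_zero 0 one_ne_zero,
      show gaussianPDF 0 1 = fun x => ((Real.toNNReal (gaussianPDFReal 0 1 x) : ℝ≥0) : ℝ≥0∞)
        from rfl,
      integral_withDensity_eq_integral_smul hmeas]
    congr 1
    ext x
    rw [NNReal.smul_def, smul_eq_mul, Real.coe_toNNReal _ (gaussianPDFReal_nonneg 0 1 x)]
  have hpdf : ∀ x : ℝ, gaussianPDFReal 0 1 x * (max x 0 * (aeval x (hermite (2*n+2)) : ℝ))
      = (Real.sqrt (2*π))⁻¹ * (max x 0 * (aeval x (hermite (2*n+2)) : ℝ)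
          * Real.exp (-(x ^ 2 / 2))) := by
    intro x
    rw [gaussianPDFReal]
    norm_num
    ring_nf
  have step2 : (∫ x : ℝ, gaussianPDFReal 0 1 x * (max x 0 * (aeval x (hermite (2*n+2)) : ℝ)))
      = (Real.sqrt (2*π))⁻¹ * ∫ x : ℝ, max x 0 * (aeval x (hermite (2*n+2)) : ℝ)
          * Real.exp (-(x ^ 2 / 2)) := by
    simp_rw [hpdf]
    exact integral_const_mul _ _
  have step3 : (∫ x : ℝ, max x 0 * (aeval x (hermite (2*n+2)) : ℝ) * Real.exp (-(x ^ 2 / 2)))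
      = ∫ x in Set.Ioi (0:ℝ), x * (aeval x (hermite (2*n+2)) : ℝ) * Real.exp (-(x ^ 2 / 2)) := by
    rw [← setIntegral_eq_integral_of_forall_compl_eq_zero (s := Set.Ioi (0:ℝ))
      (fun x hx => by
        simp only [Set.mem_Ioi, not_lt] at hx
        rw [max_eq_right hx, zero_mul, zero_mul])]
    exact setIntegral_congr_fun measurableSet_Ioi
      (fun x hx => by rw [max_eq_left (le_of_lt hx)])
  have hc0 : ((hermite (2*n)).coeff 0 : ℤ) = (-1) ^ n * (Nat.doubleFactorial (2*n-1) : ℤ) := by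
    simpa using coeff_hermite_explicit n 0
  have hval : (∫ g : ℝ, max g 0 * (aeval g (hermite (2*n+2)) : ℝ) ∂(gaussianReal 0 1))
      = (Real.sqrt (2*π))⁻¹ * ((-1 : ℝ) ^ n * (Nat.doubleFactorial (2*n-1) : ℝ)) := by
    rw [step1, step2, step3, key_integral, hc0]
    push_cast
    ring
  rw [hval]
  have h1 : (2*n+2-2)/2 = n := by omega
  have h2 : 2*n+2-3 = 2*n-1 := by omega
  rw [h1, h2, Real.sqrt_mul (by positivity : (0:ℝ) ≤ 2*π)]
  have hs1 : Real.sqrt (2*π) ≠ 0 := by positivity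
  have hs2 : Real.sqrt ((2*n+2).factorial : ℝ) ≠ 0 := by positivity
  field_simp
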